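/- Conflict generalisation for safety properties (Proposition of Section 3): let 𝔓 be a family of MCs over finite state type S with parameter type K and initial state s0, let G ⊆ S, λ ∈ ℝ, and let C ⊆ S with s0 ∈ C be a critical set for the realisation r and the safety property P_{≤λ}(◇G), i.e., Prob_{(P_r)_C}(s0,G) > λ. Then for every realisation r' : K → S with r' k = r k for every parameter k that occurs at some state of C, the set C is also a critical set for D_{r'}, i.e., Prob_{(P_{r'})_C}(s0,G) > λ, and D_{r'} violates the safety property: Prob_{P_{r'}}(s0,G) > λ. -/
import Mathlib


open scoped Classical BigOperators

/-- `n`-step reachability probability `Pr_P^n(s, G)`. -/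
noncomputable def Pr {S : Type*} [Fintype S] (P : S → S → ℝ) : ℕ → S → Set S → ℝ
  | 0, s, G => if s ∈ G then 1 else 0
  | n + 1, s, G => if s ∈ G then 1 else ∑ t, P s t * Pr P n t G

/-- Reachability probability `Prob_P(s, G) = ⨆ n, Pr_P^n(s, G)`. -/
noncomputable def Prob {S : Type*} [Fintype S] (P : S → S → ℝ) (s : S) (G : Set S) : ℝ :=
  ⨆ n : ℕ, Pr P n s G

/-- `C`-restriction of `P`: states outside `C` are made absorbing. -/
noncomputable def restrictMC {S : Type*} (C : Set S) (P : S → S → ℝ) (s t : S) : ℝ :=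
  if s ∈ C then P s t else (if t = s then 1 else 0)

/-- `n`-step probability of reaching `B` while avoiding `G`. -/
noncomputable def APr {S : Type*} [Fintype S] (P : S → S → ℝ) : ℕ → S → Set S → Set S → ℝ
  | 0, s, B, _ => if s ∈ B then 1 else 0
  | n + 1, s, B, G => if s ∈ B then 1 else if s ∈ G then 0 else ∑ t, P s t * APr P n t B G

/-- `AProb_P(s, B, G) = ⨆ n, APr_P^n(s, B, G)`. -/
noncomputable def AProb {S : Type*} [Fintype S] (P : S → S → ℝ) (s : S) (B G : Set S) : ℝ :=
  ⨆ n : ℕ, APr P n s B G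

/-- `s` has a path to `G` under `P`. -/
def HasPathTo {S : Type*} (P : S → S → ℝ) (s : S) (G : Set S) : Prop :=
  ∃ (m : ℕ) (u : ℕ → S), u 0 = s ∧ (∀ i < m, 0 < P (u i) (u (i + 1))) ∧ u m ∈ G

/-- `B_P(G)`: the set of states with no path to `G` under `P`. -/
def BSet {S : Type*} (P : S → S → ℝ) (G : Set S) : Set S :=
  {s | ¬ HasPathTo P s G}

/-- Transition function `P_r` of the instantiated MC `D_r` of a family `𝔓`. -/
noncomputable def Pinst {S K : Type*} [Fintype K] (𝔓 : S → K → ℝ) (r : K → S) (s t : S) : ℝ :=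
  ∑ k, if r k = t then 𝔓 s k else 0

/-- Parameter `k` occurs at some state of `C`. -/
def OccursIn {S K : Type*} (𝔓 : S → K → ℝ) (C : Set S) (k : K) : Prop :=
  ∃ s ∈ C, 0 < 𝔓 s k

/-- `u` is reachable from `s0` under `P`. -/
def ReachableFrom {S : Type*} (P : S → S → ℝ) (s0 u : S) : Prop :=
  ∃ (m : ℕ) (v : ℕ → S), v 0 = s0 ∧ (∀ i < m, 0 < P (v i) (v (i + 1))) ∧ v m = u

lemma Pr_nonneg {S : Type*} [Fintype S] {P : S → S → ℝ} (hP : ∀ s t, 0 ≤ P s t)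
    (n : ℕ) (s : S) (G : Set S) : 0 ≤ Pr P n s G := by
  induction n generalizing s with
  | zero => simp only [Pr]; split <;> norm_num
  | succ n ih =>
    simp only [Pr]; split
    · norm_num
    · exact Finset.sum_nonneg fun t _ => mul_nonneg (hP s t) (ih t)

lemma Pr_le_one {S : Type*} [Fintype S] {P : S → S → ℝ} (hP : ∀ s t, 0 ≤ P s t)
    (hP1 : ∀ s, ∑ t, P s t = 1) (n : ℕ) (s : S) (G : Set S) : Pr P n s G ≤ 1 := by
  induction n generalizing s with
  | zero => simp only [Pr]; split <;> norm_num
  | succ n ih =>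
    simp only [Pr]; split
    · exact le_refl 1
    · calc ∑ t, P s t * Pr P n t G ≤ ∑ t, P s t * 1 :=
            Finset.sum_le_sum fun t _ => mul_le_mul_of_nonneg_left (ih t) (hP s t)
        _ = 1 := by simp [hP1 s]

lemma Pr_absorbing {S : Type*} [Fintype S] (C : Set S) (P : S → S → ℝ)
    (n : ℕ) {s : S} {G : Set S} (hsC : s ∉ C) (hsG : s ∉ G) :
    Pr (restrictMC C P) n s G = 0 := by
  induction n with
  | zero => simp [Pr, hsG]
  | succ n ih =>
    simp only [Pr, if_neg hsG]
    rw [Finset.sum_eq_single s]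
    · simp [restrictMC, hsC, ih]
    · intro t _ hts; simp [restrictMC, hsC, hts]
    · simp

lemma Pr_restrict_le {S : Type*} [Fintype S] (C : Set S) {P : S → S → ℝ}
    (hP : ∀ s t, 0 ≤ P s t) (n : ℕ) (s : S) (G : Set S) :
    Pr (restrictMC C P) n s G ≤ Pr P n s G := by
  induction n generalizing s with
  | zero => simp only [Pr]; exact le_refl _
  | succ n ih =>
    simp only [Pr]
    split
    · exact le_refl 1
    · rename_i hsG
      by_cases hsC : s ∈ C
      · refine Finset.sum_le_sum fun t _ => ?_
        simp only [restrictMC, if_pos hsC]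
        exact mul_le_mul_of_nonneg_left (ih t) (hP s t)
      · have h0 : ∀ t, Pr (restrictMC C P) n t G = Pr (restrictMC C P) n t G := fun _ => rfl
        have : ∑ t, restrictMC C P s t * Pr (restrictMC C P) n t G
            = Pr (restrictMC C P) n s G := by
          rw [Finset.sum_eq_single s]
          · simp [restrictMC, hsC]
          · intro t _ hts; simp [restrictMC, hsC, hts]
          · simp
        rw [this, Pr_absorbing C P n hsC hsG]
        exact Finset.sum_nonneg fun t _ =>
          mul_nonneg (hP s t) (Pr_nonneg hP n t G)

lemma Pinst_nonneg {S K : Type*} [Fintype K] {𝔓 : S → K → ℝ} (h𝔓0 : ∀ s k, 0 ≤ 𝔓 s k)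
    (r : K → S) (s t : S) : 0 ≤ Pinst 𝔓 r s t :=
  Finset.sum_nonneg fun k _ => by split <;> [exact h𝔓0 s k; exact le_refl 0]

lemma Pinst_row {S K : Type*} [Fintype S] [Fintype K] {𝔓 : S → K → ℝ}
    (h𝔓1 : ∀ s, ∑ k, 𝔓 s k = 1) (r : K → S) (s : S) : ∑ t, Pinst 𝔓 r s t = 1 := by
  unfold Pinst
  rw [Finset.sum_comm]
  rw [← h𝔓1 s]
  refine Finset.sum_congr rfl fun k _ => ?_
  simp

/-- conflict generalisation for safety properties. -/
theorem stmt_4 {S K : Type*} [Fintype S] [Nonempty S] [Fintype K]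
    (𝔓 : S → K → ℝ) (h𝔓0 : ∀ s k, 0 ≤ 𝔓 s k) (h𝔓1 : ∀ s, ∑ k, 𝔓 s k = 1)
    (s0 : S) (G : Set S) (lam : ℝ) (C : Set S) (hs0 : s0 ∈ C)
    (r : K → S) (hcrit : Prob (restrictMC C (Pinst 𝔓 r)) s0 G > lam)
    (r' : K → S) (hagree : ∀ k, OccursIn 𝔓 C k → r' k = r k) :
    Prob (restrictMC C (Pinst 𝔓 r')) s0 G > lam ∧ Prob (Pinst 𝔓 r') s0 G > lam := by
  have heq : restrictMC C (Pinst 𝔓 r') = restrictMC C (Pinst 𝔓 r) := by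
    funext s t
    unfold restrictMC
    by_cases hsC : s ∈ C
    · simp only [if_pos hsC]
      unfold Pinst
      refine Finset.sum_congr rfl fun k _ => ?_
      rcases lt_or_eq_of_le (h𝔓0 s k) with hpos | h0
      · rw [hagree k ⟨s, hsC, hpos⟩]
      · simp [← h0]
    · simp [hsC]
  have h1 : Prob (restrictMC C (Pinst 𝔓 r')) s0 G > lam := by rw [heq]; exact hcrit
  refine ⟨h1, lt_of_lt_of_le h1 ?_⟩
  have hnn := Pinst_nonneg h𝔓0 r'
  refine ciSup_le fun n => ?_
  refine le_trans (Pr_restrict_le C hnn n s0 G) ?_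
  have hbdd : BddAbove (Set.range fun m => Pr (Pinst 𝔓 r') m s0 G) := by
    refine ⟨1, ?_⟩
    rintro x ⟨m, rfl⟩
    exact Pr_le_one hnn (Pinst_row h𝔓1 r') m s0 G
  exact le_ciSup hbdd n
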